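/- For any nonempty word η = x_{i1} ⋯ x_{il} ∈ X*, the antipode S of the output feedback Hopf algebra satisfies S a_η = (−1)^{|η|−1} Θ̃′_η (a_∅), where |η| = l, Θ̃′_η := θ̃′_{il} ∘ ⋯ ∘ θ̃′_{i1}, θ̃′_1 := −θ̃_1 (so θ̃′_1(a_ν) = −a_{ν x1}), and θ̃′_0 := −θ̃_0 + κ_∅ ∘ θ̃_1 (so θ̃′_0(a_ν) = −a_{ν x0} + a_{ν x1} a_∅). -/

import Mathlib

open scoped TensorProduct

noncomputable section

namespace Paper

/-- Words over the alphabet `X = {x0, x1}`, encoded as lists over `Fin 2`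
(`0` stands for the letter `x0` and `1` for the letter `x1`). -/
abbrev Word : Type := List (Fin 2)

/-- Formal power series `ℝ⟨⟨X⟩⟩`, given by their coefficient functions `η ↦ ⟨c,η⟩`. -/
abbrev Series : Type := Word → ℝ

/-- The left shift `x_i⁻¹(c)`. -/
def lshift (i : Fin 2) (c : Series) : Series := fun w => c (i :: w)

/-- Left concatenation `x_i c` of the letter `x_i` onto every word of `c`. -/
def lconcat (i : Fin 2) (c : Series) : Series := fun w =>
  match w with
  | [] => 0
  | j :: v => if j = i then c v else 0

/-- Right concatenation `p x_i` of the letter `x_i` onto every word of `p`. -/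
def rconcat {R : Type*} [Zero R] (i : Fin 2) (p : Word → R) : Word → R := fun w =>
  if w.getLast? = some i then p w.dropLast else 0

/-- The series of a single word. -/
def ind (η : Word) : Series := fun w => if w = η then 1 else 0

/-- The empty word as a series, the unit `∅` (often written `1`). -/
def one : Series := ind []

/-- The shuffle product, defined coefficientwise by the recursion
`⟨c ⧢ d, ∅⟩ = ⟨c,∅⟩⟨d,∅⟩` and `⟨c ⧢ d, x_i w⟩ = ⟨x_i⁻¹(c) ⧢ d, w⟩ + ⟨c ⧢ x_i⁻¹(d), w⟩`,
which is the bilinear (and ultrametrically continuous) extension of the recursive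
shuffle product of words. -/
def shuffleFn : Series → Series → Word → ℝ
  | c, d, [] => c [] * d []
  | c, d, i :: w => shuffleFn (lshift i c) d w + shuffleFn c (lshift i d) w

/-- The shuffle product on `ℝ⟨⟨X⟩⟩`. -/
def sh (c d : Series) : Series := shuffleFn c d

/-- The map `φ_d(x_i)` for the modified composition product:
`φ_d(x0)(e) = x0 e` and `φ_d(x1)(e) = x1 e + x0 (d ⧢ e)`. -/
def phiLetter (d : Series) (i : Fin 2) (e : Series) : Series :=
  if i = 0 then lconcat 0 e else lconcat 1 e + lconcat 0 (sh d e)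

/-- `φ_d(η)`, the algebra-homomorphism extension determined by
`φ_d(x_i η) = φ_d(x_i) ∘ φ_d(η)` and `φ_d(∅) = id`. -/
def phi (d : Series) : Word → Series → Series
  | [], e => e
  | i :: η, e => phiLetter d i (phi d η e)

/-- The modified composition product `c ∘̃ d = Σ_η ⟨c,η⟩ φ_d(η)(1)`. -/
def mcomp (c d : Series) : Series := fun w => ∑' η : Word, c η * phi d η one w

/-- The map `ψ_d(x_i)` for the composition product:
`ψ_d(x0)(e) = x0 e` and `ψ_d(x1)(e) = x0 (d ⧢ e)`. -/
def psiLetter (d : Series) (i : Fin 2) (e : Series) : Series :=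
  if i = 0 then lconcat 0 e else lconcat 0 (sh d e)

/-- `ψ_d(η)`, determined by `ψ_d(x_i η) = ψ_d(x_i) ∘ ψ_d(η)` and `ψ_d(∅) = id`. -/
def psi (d : Series) : Word → Series → Series
  | [], e => e
  | i :: η, e => psiLetter d i (psi d η e)

/-- The composition product `c ∘ d = Σ_η ⟨c,η⟩ ψ_d(η)(1)`. -/
def comp (c d : Series) : Series := fun w => ∑' η : Word, c η * psi d η one w

/-- The group operation on `ℝ⟨⟨X_δ⟩⟩ = {δ + c}`, transported to the `c`-parts:
`c_δ ∘ d_δ = δ + (d + c ∘̃ d)`. -/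
def gop (c d : Series) : Series := d + mcomp c d

/-- The Ferfera series `c = Σ_{k ≥ 0} k! x1^k`. -/
def ferfera : Series := fun w =>
  if w = List.replicate w.length (1 : Fin 2) then (Nat.factorial w.length : ℝ) else 0

/-- The degree of a word, `deg(η) = 2|η|_{x0} + |η|_{x1} + 1`. -/
def degW (η : Word) : ℕ := 2 * η.count 0 + η.count 1 + 1

/-- The output feedback Hopf algebra `H`: the free unital commutative `ℝ`-algebra on the
coordinate functions `a_η`, realized as polynomials in commuting variables indexed by words. -/
abbrev H : Type := MvPolynomial Word ℝ

/-- The coordinate function `a_η`. -/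
def aw (η : Word) : H := MvPolynomial.X η

/-- Character (pointwise) evaluation of elements of `H` at a series `c`:
`(a_{η₁} ⋯ a_{η_l})(c) = ⟨c,η₁⟩ ⋯ ⟨c,η_l⟩`, extended as an algebra map. -/
def evalS (c : Series) : H →ₐ[ℝ] ℝ := MvPolynomial.aeval c

/-- Evaluation of `H ⊗ H` at a pair of series: `(p ⊗ q)(c,d) = p(c) q(d)`. -/
def evalPair (c d : Series) : H ⊗[ℝ] H →ₗ[ℝ] ℝ :=
  (LinearMap.mul' ℝ ℝ).comp (TensorProduct.map (evalS c).toLinearMap (evalS d).toLinearMap)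

/-- The counit `ε` of `H`: `ε(a_η) = 0`, `ε(1) = 1`. -/
def counit : H →ₐ[ℝ] ℝ := evalS 0

/-- The defining property of the full coproduct `Δ` of the output feedback Hopf algebra:
`Δ a_η = Δ̃ a_η + 1 ⊗ a_η` where `Δ̃ a_η (c,d) = ⟨c ∘̃ d, η⟩`, i.e.
`(Δ a_η)(c,d) = ⟨c ∘̃ d, η⟩ + ⟨d, η⟩` for all series `c, d`; `Δ` is an algebra morphism. -/
def IsFBCoproduct (Δ : H →ₐ[ℝ] (H ⊗[ℝ] H)) : Prop :=
  ∀ (η : Word) (c d : Series), evalPair c d (Δ (aw η)) = mcomp c d η + d η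

/-- `S` is an antipode for the coproduct `Δ` (with counit `ε`):
`μ ∘ (S ⊗ id) ∘ Δ = 1·ε = μ ∘ (id ⊗ S) ∘ Δ`. -/
def IsAntipode (Δ : H →ₐ[ℝ] (H ⊗[ℝ] H)) (S : H →ₗ[ℝ] H) : Prop :=
  (∀ p : H, LinearMap.mul' ℝ H (TensorProduct.map S LinearMap.id (Δ p)) = counit p • 1) ∧
  (∀ p : H, LinearMap.mul' ℝ H (TensorProduct.map LinearMap.id S (Δ p)) = counit p • 1)

/-- The right-augmentation operator `θ̃_i`, the derivation on `H` with `θ̃_i(a_η) = a_{η x_i}`. -/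
def thetaR (i : Fin 2) : Derivation ℝ H H :=
  MvPolynomial.mkDerivation ℝ fun η => aw (η ++ [i])

/-- The left-augmentation operator `θ_i`, the derivation on `H` with `θ_i(a_η) = a_{x_i η}`. -/
def thetaL (i : Fin 2) : Derivation ℝ H H :=
  MvPolynomial.mkDerivation ℝ fun η => aw (i :: η)

/-- The multiplication operator `κ_∅(h) = h · a_∅`. -/
def kappaE : H →ₗ[ℝ] H := LinearMap.mulRight ℝ (aw [])

/-- The shuffle coefficient `⟨ξ ⧢ ν, η⟩`. -/
def shCoeff (ξ ν η : Word) : ℝ := sh (ind ξ) (ind ν) η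

/-- The finite set of words of length `n`. -/
def wordsLen (n : ℕ) : Finset Word :=
  (Finset.univ : Finset (Fin n → Fin 2)).image List.ofFn

/-- The deshuffle coproduct `Δ_⧢ a_η = Σ_{ξ,ν} ⟨ξ ⧢ ν, η⟩ a_ξ ⊗ a_ν`
(the unique coproduct satisfying `Δ_⧢ a_∅ = a_∅ ⊗ a_∅` and the coderivation recursions
with respect to the augmentation operators). -/
def deshuffle (η : Word) : H ⊗[ℝ] H :=
  ∑ k ∈ Finset.range (η.length + 1), ∑ ξ ∈ wordsLen k, ∑ ν ∈ wordsLen (η.length - k),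
    shCoeff ξ ν η • (aw ξ ⊗ₜ[ℝ] aw ν)

/-- Iterated integrals: `E_∅[u](t) = 1`, `E_{x_i η}[u](t) = ∫₀ᵗ u_i(s) E_η[u](s) ds`. -/
def E (u : Fin 2 → ℝ → ℝ) : Word → ℝ → ℝ
  | [], _ => 1
  | i :: η, t => ∫ s in (0:ℝ)..t, u i s * E u η s

end Paper

namespace Paper

/-- The operator `θ̃′_i` on `H`: `θ̃′_1 := −θ̃_1` and `θ̃′_0 := −θ̃_0 + κ_∅ ∘ θ̃_1`. -/
def thetaP (i : Fin 2) : H →ₗ[ℝ] H :=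
  if i = 0 then -(thetaR 0).toLinearMap + kappaE ∘ₗ (thetaR 1).toLinearMap
  else -(thetaR 1).toLinearMap

/-- `Θ̃′_η := θ̃′_{i_l} ∘ ⋯ ∘ θ̃′_{i_1}` for `η = x_{i_1} ⋯ x_{i_l}`. -/
def thetaPWord : Word → (H →ₗ[ℝ] H)
  | [] => LinearMap.id
  | i :: η => thetaPWord η ∘ₗ thetaP i

end Paper

namespace Paper

variable {R : Type*} [CommRing R] {S' : Type*} [CommRing S']

/-- polymorphic left shift -/
def lshiftR (i : Fin 2) (c : Word → R) : Word → R := fun w => c (i :: w)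

def lconcatR (i : Fin 2) (c : Word → R) : Word → R := fun w =>
  match w with
  | [] => 0
  | j :: v => if j = i then c v else 0

def shR : (Word → R) → (Word → R) → Word → R
  | c, d, [] => c [] * d []
  | c, d, i :: w => shR (lshiftR i c) d w + shR c (lshiftR i d) w

def oneR : Word → R := fun w => if w = [] then 1 else 0

def phiLR (d : Word → R) (i : Fin 2) (e : Word → R) : Word → R :=
  if i = 0 then lconcatR 0 e else fun w => lconcatR 1 e w + lconcatR 0 (shR d e) w

def phiRW (d : Word → R) : Word → (Word → R) → (Word → R)
  | [], e => e
  | i :: η, e => phiLR d i (phiRW d η e)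

lemma shR_nil (c d : Word → R) : shR c d [] = c [] * d [] := rfl

lemma shR_cons (c d : Word → R) (i : Fin 2) (w : Word) :
    shR c d (i :: w) = shR (lshiftR i c) d w + shR c (lshiftR i d) w := rfl

/-- bridge: Paper's shuffle equals polymorphic shuffle at ℝ -/
lemma sh_eq_shR : ∀ (w : Word) (c d : Series), sh c d w = shR c d w := by
  intro w
  induction w with
  | nil => intro c d; rfl
  | cons i w ih =>
      intro c d
      show shuffleFn c d (i :: w) = _
      rw [shuffleFn, shR_cons]
      exact congrArg₂ (· + ·) (ih _ _) (ih _ _)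

lemma lconcat_eq_lconcatR (i : Fin 2) (c : Series) : lconcat i c = lconcatR i c := rfl

lemma one_eq_oneR : one = (oneR : Word → ℝ) := by
  funext w; cases w <;> rfl

lemma phi_eq_phiRW (d : Series) : ∀ (ξ : Word) (e : Series), phi d ξ e = phiRW d ξ e := by
  intro ξ
  induction ξ with
  | nil => intro e; rfl
  | cons i ξ ih =>
      intro e
      show phiLetter d i (phi d ξ e) = phiLR d i (phiRW d ξ e)
      rw [ih]
      unfold phiLetter phiLR
      by_cases hi : i = 0
      · simp only [hi, if_true]; rfl
      · simp only [hi, if_false]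
        funext w
        show lconcat 1 _ w + lconcat 0 (sh d _) w = _
        rw [lconcat_eq_lconcatR, lconcat_eq_lconcatR,
          show sh d (phiRW d ξ e) = shR d (phiRW d ξ e) from funext fun v => sh_eq_shR v _ _]

end Paper
namespace Paper

variable {R : Type*} [CommRing R] {S' : Type*} [CommRing S']

lemma shR_addL : ∀ (w : Word) (c c' d : Word → R),
    shR (fun v => c v + c' v) d w = shR c d w + shR c' d w := by
  intro w
  induction w with
  | nil => intro c c' d; simp [shR_nil]; ring
  | cons i w ih =>
      intro c c' d
      rw [shR_cons, shR_cons, shR_cons]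
      have h1 : shR (lshiftR i fun v => c v + c' v) d w
          = shR (lshiftR i c) d w + shR (lshiftR i c') d w := ih _ _ _
      rw [h1, ih]
      ring

lemma shR_comm : ∀ (w : Word) (c d : Word → R), shR c d w = shR d c w := by
  intro w
  induction w with
  | nil => intro c d; simp [shR_nil]; ring
  | cons i w ih =>
      intro c d
      rw [shR_cons, shR_cons, ih, ih (lshiftR i d) c]
      ring

lemma shR_addR (w : Word) (c d d' : Word → R) :
    shR c (fun v => d v + d' v) w = shR c d w + shR c d' w := by
  rw [shR_comm w c, shR_addL, shR_comm w d c, shR_comm w d' c]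

lemma shR_smulL : ∀ (w : Word) (a : R) (c d : Word → R),
    shR (fun v => a * c v) d w = a * shR c d w := by
  intro w
  induction w with
  | nil => intro a c d; simp [shR_nil]; ring
  | cons i w ih =>
      intro a c d
      rw [shR_cons, shR_cons]
      have h1 : shR (lshiftR i fun v => a * c v) d w = a * shR (lshiftR i c) d w := ih _ _ _
      rw [h1, ih]
      ring

lemma shR_smulR (w : Word) (a : R) (c d : Word → R) :
    shR c (fun v => a * d v) w = a * shR c d w := by
  rw [shR_comm w c, shR_smulL, shR_comm w d c]

lemma shR_zeroR : ∀ (w : Word) (c : Word → R), shR c (fun _ => 0) w = 0 := by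
  intro w
  induction w with
  | nil => intro c; simp [shR_nil]
  | cons i w ih =>
      intro c
      rw [shR_cons]
      have : lshiftR i (fun _ => (0:R)) = fun _ => (0:R) := rfl
      rw [this, ih, ih]; ring

lemma shR_local : ∀ (w : Word) (c c' d d' : Word → R),
    (∀ u : Word, u.length ≤ w.length → c u = c' u) →
    (∀ u : Word, u.length ≤ w.length → d u = d' u) →
    shR c d w = shR c' d' w := by
  intro w
  induction w with
  | nil =>
      intro c c' d d' hc hd
      rw [shR_nil, shR_nil, hc [] (by simp), hd [] (by simp)]
  | cons i w ih =>
      intro c c' d d' hc hd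
      rw [shR_cons, shR_cons]
      have h1 := ih (lshiftR i c) (lshiftR i c') d d'
        (fun u hu => hc (i :: u) (by simpa using Nat.succ_le_succ hu))
        (fun u hu => hd u (le_trans hu (Nat.le_succ _)))
      have h2 := ih c c' (lshiftR i d) (lshiftR i d')
        (fun u hu => hc u (le_trans hu (Nat.le_succ _)))
        (fun u hu => hd (i :: u) (by simpa using Nat.succ_le_succ hu))
      rw [h1, h2]

lemma shR_assoc : ∀ (w : Word) (a b c : Word → R),
    shR (shR a b) c w = shR a (shR b c) w := by
  intro w
  induction w with
  | nil => intro a b c; simp [shR_nil]; ring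
  | cons i w ih =>
      intro a b c
      rw [shR_cons, shR_cons]
      have hL : lshiftR i (shR a b) = fun v => shR (lshiftR i a) b v + shR a (lshiftR i b) v := by
        funext v; exact shR_cons a b i v
      have hR : lshiftR i (shR b c) = fun v => shR (lshiftR i b) c v + shR b (lshiftR i c) v := by
        funext v; exact shR_cons b c i v
      rw [hL, hR, shR_addL, shR_addR, ih, ih, ih]
      ring

/-- hom commutation with shuffle -/
lemma map_shR (f : R →+* S') : ∀ (w : Word) (c d : Word → R),
    f (shR c d w) = shR (f ∘ c) (f ∘ d) w := by
  intro w
  induction w with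
  | nil => intro c d; rw [shR_nil, shR_nil, map_mul]; rfl
  | cons i w ih =>
      intro c d
      rw [shR_cons, shR_cons, map_add, ih, ih]
      rfl

lemma map_lconcatR (f : R →+* S') (i : Fin 2) (c : Word → R) (w : Word) :
    f (lconcatR i c w) = lconcatR i (f ∘ c) w := by
  cases w with
  | nil => simp [lconcatR]
  | cons j v =>
      show f (if j = i then c v else 0) = if j = i then f (c v) else 0
      split <;> simp

lemma map_oneR (f : R →+* S') (w : Word) : f (oneR w) = oneR w := by
  unfold oneR; split <;> simp

lemma map_phiRW (f : R →+* S') (d : Word → R) : ∀ (ξ : Word) (e : Word → R) (w : Word),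
    f (phiRW d ξ e w) = phiRW (f ∘ d) ξ (f ∘ e) w := by
  intro ξ
  induction ξ with
  | nil => intro e w; rfl
  | cons i ξ ih =>
      intro e w
      show f (phiLR d i (phiRW d ξ e) w) = phiLR (f ∘ d) i (phiRW (f ∘ d) ξ (f ∘ e)) w
      have hcomp : f ∘ (phiRW d ξ e) = phiRW (f ∘ d) ξ (f ∘ e) := funext fun v => ih e v
      unfold phiLR
      by_cases hi : i = 0
      · simp only [hi, if_true]
        rw [map_lconcatR, hcomp]
      · simp only [hi, if_false]
        rw [map_add, map_lconcatR, map_lconcatR, hcomp]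
        have : f ∘ (shR d (phiRW d ξ e)) = shR (f ∘ d) (phiRW (f ∘ d) ξ (f ∘ e)) := by
          funext v; rw [Function.comp_apply, map_shR, hcomp]
        rw [this]

end Paper
namespace Paper

variable {R : Type*} [CommRing R]

def mW (w : Word) : ℕ := 2 * w.count 0 + w.count 1

lemma fin2_one {i : Fin 2} (h : i ≠ 0) : i = 1 := by
  have h2 := i.isLt
  have h0 : i.val ≠ 0 := fun hv => h (Fin.ext hv)
  exact Fin.ext (by simp; omega)

lemma mW_nil : mW ([] : Word) = 0 := rfl

lemma mW_cons0 (w : Word) : mW ((0 : Fin 2) :: w) = mW w + 2 := by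
  simp [mW, List.count_cons]; ring

lemma mW_cons1 (w : Word) : mW ((1 : Fin 2) :: w) = mW w + 1 := by
  simp [mW, List.count_cons]; ring

lemma mW_cons (i : Fin 2) (w : Word) :
    mW (i :: w) = mW w + (if i = 0 then 2 else 1) := by
  by_cases hi : i = 0
  · subst hi; rw [if_pos rfl, mW_cons0]
  · rw [fin2_one hi, if_neg (by rw [fin2_one hi] at hi; exact hi), mW_cons1]

lemma mW_cons_le (i : Fin 2) (w : Word) : mW w + 1 ≤ mW (i :: w) := by
  rw [mW_cons]; split <;> omega

lemma shR_minlen : ∀ (w : Word) (k : ℕ) (d e : Word → R),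
    (∀ v : Word, v.length < k → e v = 0) → w.length < k → shR d e w = 0 := by
  intro w
  induction w with
  | nil =>
      intro k d e he hw
      rw [shR_nil, he [] hw, mul_zero]
  | cons i w ih =>
      intro k d e he hw
      obtain ⟨k', rfl⟩ : ∃ k', k = k' + 1 := ⟨k - 1, by omega⟩
      rw [shR_cons]
      rw [ih (k'+1) (lshiftR i d) e he (by simp at hw ⊢; omega),
        ih k' d (lshiftR i e) (fun v hv => he (i :: v) (by simp; omega)) (by simp at hw ⊢; omega)]
      ring

lemma phiRW_minlen (d : Word → R) : ∀ (ξ : Word) (w : Word),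
    w.length < ξ.length → phiRW d ξ oneR w = 0 := by
  intro ξ
  induction ξ with
  | nil => intro w hw; simp at hw
  | cons i ξ ih =>
      intro w hw
      show phiLR d i (phiRW d ξ oneR) w = 0
      unfold phiLR
      by_cases hi : i = 0
      · simp only [hi, if_true]
        cases w with
        | nil => rfl
        | cons j v =>
            show (if j = 0 then phiRW d ξ oneR v else 0) = 0
            split
            · exact ih v (by simp at hw ⊢; omega)
            · rfl
      · simp only [hi, if_false]
        cases w with
        | nil => show (0:R) + 0 = 0; ring
        | cons j v =>
            show (if j = 1 then phiRW d ξ oneR v else 0) + (if j = 0 then shR d (phiRW d ξ oneR) v else 0) = 0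
            have h1 : (if j = 1 then phiRW d ξ oneR v else 0) = (0:R) := by
              split
              · exact ih v (by simp at hw ⊢; omega)
              · rfl
            have h2 : (if j = 0 then shR d (phiRW d ξ oneR) v else 0) = (0:R) := by
              split
              · exact shR_minlen v ξ.length d _ (fun u hu => ih u hu) (by simp at hw ⊢; omega)
              · rfl
            rw [h1, h2, add_zero]

lemma shR_mbound : ∀ (w : Word) (c e : Word → R),
    shR c e w ≠ 0 → ∃ v : Word, e v ≠ 0 ∧ mW v ≤ mW w := by
  intro w
  induction w with
  | nil =>
      intro c e h
      refine ⟨[], fun h0 => h ?_, le_refl _⟩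
      rw [shR_nil, h0, mul_zero]
  | cons i w ih =>
      intro c e h
      rw [shR_cons] at h
      have : shR (lshiftR i c) e w ≠ 0 ∨ shR c (lshiftR i e) w ≠ 0 := by
        by_contra hc; push_neg at hc; rw [hc.1, hc.2] at h; simp at h
      rcases this with h1 | h2
      · obtain ⟨v, hv, hm⟩ := ih _ _ h1
        exact ⟨v, hv, le_trans hm (by have := mW_cons_le i w; omega)⟩
      · obtain ⟨v, hv, hm⟩ := ih _ _ h2
        refine ⟨i :: v, hv, ?_⟩
        rw [mW_cons, mW_cons]; omega

lemma phiRW_mbound (d : Word → R) : ∀ (ξ : Word) (w : Word),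
    phiRW d ξ oneR w ≠ 0 → mW ξ ≤ mW w ∧ (mW w = mW ξ → w = ξ) := by
  intro ξ
  induction ξ with
  | nil =>
      intro w hw
      have : w = [] := by
        by_contra hne
        exact hw (show (if w = [] then (1:R) else 0) = 0 from if_neg hne)
      subst this; exact ⟨le_refl _, fun _ => rfl⟩
  | cons i ξ ih =>
      intro w hw
      replace hw : phiLR d i (phiRW d ξ oneR) w ≠ 0 := hw
      unfold phiLR at hw
      by_cases hi : i = 0
      · subst hi
        simp only [if_true] at hw
        cases w with
        | nil => exact absurd rfl hw
        | cons j v =>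
            replace hw : (if j = 0 then phiRW d ξ oneR v else 0) ≠ 0 := hw
            by_cases hj : j = 0
            · subst hj
              simp only [if_true] at hw
              obtain ⟨h1, h2⟩ := ih v hw
              rw [mW_cons0, mW_cons0]
              constructor
              · omega
              · intro he
                have : mW v = mW ξ := by omega
                rw [h2 this]
            · simp [hj] at hw
      · simp only [hi, if_false] at hw
        cases w with
        | nil => exact absurd (show lconcatR 1 (phiRW d ξ oneR) []
              + lconcatR 0 (shR d (phiRW d ξ oneR)) [] = 0 from by show (0:R)+0=0; ring) hw
        | cons j v =>
            replace hw : (if j = 1 then phiRW d ξ oneR v else 0)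
                + (if j = 0 then shR d (phiRW d ξ oneR) v else 0) ≠ 0 := hw
            have hi1 : i = 1 := fin2_one hi
            subst hi1
            have : (if j = 1 then phiRW d ξ oneR v else 0) ≠ 0
                ∨ (if j = 0 then shR d (phiRW d ξ oneR) v else 0) ≠ (0:R) := by
              by_contra hc; push_neg at hc; rw [hc.1, hc.2] at hw; simp at hw
            rcases this with h1 | h2
            · have hj : j = 1 := by by_contra hj; simp [hj] at h1
              subst hj
              simp only [if_true] at h1
              obtain ⟨hb1, hb2⟩ := ih v h1
              rw [mW_cons1, mW_cons1]
              constructor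
              · omega
              · intro he
                have : mW v = mW ξ := by omega
                rw [hb2 this]
            · have hj : j = 0 := by by_contra hj; simp [hj] at h2
              subst hj
              simp only [if_true] at h2
              obtain ⟨u, hu, hmu⟩ := shR_mbound v d _ h2
              obtain ⟨hb1, _⟩ := ih u hu
              rw [mW_cons0, mW_cons1]
              constructor
              · omega
              · intro he; omega

lemma phiRW_diag (d : Word → R) : ∀ (η : Word), phiRW d η oneR η = 1 := by
  intro η
  induction η with
  | nil => rfl
  | cons i η ih =>
      show phiLR d i (phiRW d η oneR) (i :: η) = 1
      unfold phiLR
      by_cases hi : i = 0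
      · subst hi; simp only [if_true]
        show (if (0:Fin 2) = 0 then phiRW d η oneR η else 0) = 1
        rw [if_pos rfl, ih]
      · have hi1 : i = 1 := fin2_one hi
        subst hi1
        rw [if_neg (by decide)]
        show (if (1:Fin 2) = 1 then phiRW d η oneR η else 0)
            + (if (1:Fin 2) = 0 then shR d (phiRW d η oneR) η else 0) = 1
        rw [if_pos rfl, if_neg (by decide), ih, add_zero]

end Paper
namespace Paper

lemma mem_wordsLen {n : ℕ} {ξ : Word} : ξ ∈ wordsLen n ↔ ξ.length = n := by
  constructor
  · intro h
    obtain ⟨f, _, rfl⟩ := Finset.mem_image.1 h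
    simp
  · intro h
    subst h
    exact Finset.mem_image.2 ⟨ξ.get, Finset.mem_univ _, List.ofFn_get ξ⟩

lemma wordsLen_zero : wordsLen 0 = {([] : Word)} := by
  ext ξ
  simp [mem_wordsLen, List.length_eq_zero_iff]

lemma wordsLen_succ (n : ℕ) :
    wordsLen (n+1) = (wordsLen n).image (List.cons 0) ∪ (wordsLen n).image (List.cons 1) := by
  ext ξ
  simp only [mem_wordsLen, Finset.mem_union, Finset.mem_image]
  constructor
  · intro h
    cases ξ with
    | nil => simp at h
    | cons i t =>
        by_cases hi : i = 0
        · exact Or.inl ⟨t, by simp at h; exact h, by rw [hi]⟩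
        · exact Or.inr ⟨t, by simp at h; exact h, by rw [fin2_one hi]⟩
  · rintro (⟨t, ht, rfl⟩ | ⟨t, ht, rfl⟩) <;> simp [ht]

lemma sum_wordsLen_succ {M : Type*} [AddCommMonoid M] (n : ℕ) (f : Word → M) :
    ∑ ξ ∈ wordsLen (n+1), f ξ
      = (∑ ξ ∈ wordsLen n, f ((0 : Fin 2) :: ξ)) + ∑ ξ ∈ wordsLen n, f ((1 : Fin 2) :: ξ) := by
  rw [wordsLen_succ, Finset.sum_union, Finset.sum_image, Finset.sum_image]
  · intro a _ b _ h; exact List.tail_eq_of_cons_eq h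
  · intro a _ b _ h; exact List.tail_eq_of_cons_eq h
  · rw [Finset.disjoint_left]
    rintro x hx hy
    obtain ⟨a, _, rfl⟩ := Finset.mem_image.1 hx
    obtain ⟨b, _, hb⟩ := Finset.mem_image.1 hy
    exact absurd (List.head_eq_of_cons_eq hb) (by decide)

end Paper
namespace Paper

/-- the generic series with polynomial coefficients -/
def gS : Word → H := fun ν => aw ν

/-- the generic coefficient polynomial `⟨φ_d(ξ)(1), η⟩` -/
def QQ (ξ η : Word) : H := phiRW gS ξ oneR η

lemma thetaR_X (i : Fin 2) (μ : Word) : thetaR i (aw μ) = aw (μ ++ [i]) :=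
  MvPolynomial.mkDerivation_X _ _ _

lemma thetaP_one_apply (h : H) : thetaP 1 h = -(thetaR 1 h) := by
  unfold thetaP
  rw [if_neg (by decide)]
  rfl

lemma thetaP_zero_apply (h : H) : thetaP 0 h = -(thetaR 0 h) + thetaR 1 h * aw [] := by
  unfold thetaP
  rw [if_pos rfl]
  show -(thetaR 0 h) + kappaE (thetaR 1 h) = _
  rw [kappaE, LinearMap.mulRight_apply]

lemma thetaPWord_cons (i : Fin 2) (ξ : Word) (h : H) :
    thetaPWord (i :: ξ) h = thetaPWord ξ (thetaP i h) := rfl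

lemma QQ_nil (η : Word) (hη : η ≠ []) : QQ [] η = 0 := by
  show oneR η = 0
  exact if_neg hη

lemma QQ_nil_nil : QQ [] [] = 1 := rfl

lemma QQ_cons00 (ξ η : Word) : QQ ((0:Fin 2) :: ξ) ((0:Fin 2) :: η) = QQ ξ η := by
  show phiLR gS 0 (phiRW gS ξ oneR) ((0:Fin 2) :: η) = _
  unfold phiLR
  rw [if_pos rfl]
  show (if (0 : Fin 2) = 0 then phiRW gS ξ oneR η else 0) = _
  rw [if_pos rfl]; rfl

lemma QQ_cons01 (ξ η : Word) : QQ ((0:Fin 2) :: ξ) ((1:Fin 2) :: η) = 0 := by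
  show phiLR gS 0 (phiRW gS ξ oneR) ((1:Fin 2) :: η) = _
  unfold phiLR
  rw [if_pos rfl]
  show (if (1 : Fin 2) = 0 then phiRW gS ξ oneR η else 0) = _
  rw [if_neg (by decide)]

lemma QQ_cons10 (ξ η : Word) :
    QQ ((1:Fin 2) :: ξ) ((0:Fin 2) :: η) = shR gS (phiRW gS ξ oneR) η := by
  show phiLR gS 1 (phiRW gS ξ oneR) ((0:Fin 2) :: η) = _
  unfold phiLR
  rw [if_neg (by decide)]
  show (if (0 : Fin 2) = 1 then phiRW gS ξ oneR η else 0)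
      + (if (0 : Fin 2) = 0 then shR gS (phiRW gS ξ oneR) η else 0) = _
  rw [if_neg (by decide), if_pos rfl, zero_add]

lemma QQ_cons11 (ξ η : Word) : QQ ((1:Fin 2) :: ξ) ((1:Fin 2) :: η) = QQ ξ η := by
  show phiLR gS 1 (phiRW gS ξ oneR) ((1:Fin 2) :: η) = _
  unfold phiLR
  rw [if_neg (by decide)]
  show (if (1 : Fin 2) = 1 then phiRW gS ξ oneR η else 0)
      + (if (1 : Fin 2) = 0 then shR gS (phiRW gS ξ oneR) η else 0) = _
  rw [if_pos rfl, if_neg (by decide), add_zero]; rfl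

lemma QQ_len_lt {ξ η : Word} (h : η.length < ξ.length) : QQ ξ η = 0 :=
  phiRW_minlen gS ξ η h

lemma QQ_diag (η : Word) : QQ η η = 1 := phiRW_diag gS η

/-- the key polynomial combination -/
def SumForm (h : H) (η : Word) : H :=
  ∑ k ∈ Finset.range (η.length + 1), ∑ ξ ∈ wordsLen k,
    ((-1:ℝ) ^ ξ.length) • thetaPWord ξ h * QQ ξ η

lemma SumForm_cutoff (h : H) (v : Word) {n : ℕ} (hn : v.length ≤ n) :
    SumForm h v = ∑ k ∈ Finset.range (n + 1), ∑ ξ ∈ wordsLen k,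
      ((-1:ℝ) ^ ξ.length) • thetaPWord ξ h * QQ ξ v := by
  unfold SumForm
  apply Finset.sum_subset
  · exact Finset.range_subset_range.2 (by omega)
  · intro k hk hk'
    apply Finset.sum_eq_zero
    intro ξ hξ
    have : v.length < ξ.length := by
      rw [mem_wordsLen.1 hξ]
      simp at hk hk'; omega
    rw [QQ_len_lt this, mul_zero]

lemma SumForm_add (h h' : H) (η : Word) :
    SumForm (h + h') η = SumForm h η + SumForm h' η := by
  unfold SumForm
  rw [← Finset.sum_add_distrib]
  apply Finset.sum_congr rfl
  intro k _
  rw [← Finset.sum_add_distrib]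
  apply Finset.sum_congr rfl
  intro ξ _
  rw [map_add, smul_add, add_mul]

lemma SumForm_neg (h : H) (η : Word) : SumForm (-h) η = -SumForm h η := by
  unfold SumForm
  rw [← Finset.sum_neg_distrib]
  apply Finset.sum_congr rfl
  intro k _
  rw [← Finset.sum_neg_distrib]
  apply Finset.sum_congr rfl
  intro ξ _
  rw [map_neg, smul_neg, neg_mul]

lemma shR_sumR {R : Type*} [CommRing R] {ι : Type*} [DecidableEq ι] (s : Finset ι)
    (c : Word → R) (F : ι → Word → R) (w : Word) :
    shR c (fun v => ∑ i ∈ s, F i v) w = ∑ i ∈ s, shR c (F i) w := by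
  induction s using Finset.induction with
  | empty => simpa using shR_zeroR w c
  | @insert a t hnot ih =>
      rw [Finset.sum_insert hnot]
      have h1 : (fun v => ∑ i ∈ insert a t, F i v) = fun v => F a v + ∑ i ∈ t, F i v := by
        funext v; rw [Finset.sum_insert hnot]
      rw [h1, shR_addR, ih]

lemma SumForm_nil (h : H) : SumForm h [] = h := by
  unfold SumForm
  rw [show ([] : Word).length + 1 = 1 from rfl, Finset.sum_range_one, wordsLen_zero,
    Finset.sum_singleton, QQ_nil_nil, mul_one]
  show ((-1:ℝ) ^ 0) • LinearMap.id (M := H) h = h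
  simp

lemma SumForm_one_cons (h : H) (η : Word) :
    SumForm h ((1 : Fin 2) :: η) = SumForm (thetaR 1 h) η := by
  unfold SumForm
  rw [show ((1:Fin 2) :: η).length + 1 = (η.length + 1) + 1 by simp, Finset.sum_range_succ']
  have h0 : (∑ ξ ∈ wordsLen 0, ((-1:ℝ) ^ ξ.length) • thetaPWord ξ h * QQ ξ ((1:Fin 2) :: η)) = 0 := by
    rw [wordsLen_zero, Finset.sum_singleton, QQ_nil _ (by simp), mul_zero]
  rw [h0, add_zero]
  apply Finset.sum_congr rfl
  intro k _
  rw [sum_wordsLen_succ]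
  have hz : (∑ ξ ∈ wordsLen k,
      ((-1:ℝ) ^ (List.length ((0:Fin 2) :: ξ))) • thetaPWord ((0:Fin 2) :: ξ) h
        * QQ ((0:Fin 2) :: ξ) ((1:Fin 2) :: η)) = 0 := by
    apply Finset.sum_eq_zero
    intro ξ _
    rw [QQ_cons01, mul_zero]
  rw [hz, zero_add]
  apply Finset.sum_congr rfl
  intro ξ _
  rw [QQ_cons11, thetaPWord_cons, thetaP_one_apply, map_neg, List.length_cons,
    pow_succ, mul_neg_one, neg_smul_neg]

end Paper
namespace Paper

lemma smul_helper1 (s : ℝ) (A B Q : H) :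
    (s * -1) • (-A + B) * Q = s • A * Q - s • B * Q := by
  rw [smul_mul_assoc, smul_mul_assoc, smul_mul_assoc, add_mul, neg_mul, mul_neg_one, neg_smul,
    smul_add, smul_neg, neg_add, neg_neg, ← sub_eq_add_neg]

lemma smul_helper2 (s : ℝ) (A T : H) : (s * -1) • (-A) * T = s • A * T := by
  rw [mul_neg_one, neg_smul_neg]

lemma SumForm_zero_cons (h : H) (η : Word) :
    SumForm h ((0 : Fin 2) :: η)
      = SumForm (thetaR 0 h) η - SumForm (thetaR 1 h * aw []) η
        + shR gS (fun v => SumForm (thetaR 1 h) v) η := by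
  have step1 : SumForm h ((0:Fin 2) :: η)
      = ∑ k ∈ Finset.range (η.length + 1),
          ((∑ ξ ∈ wordsLen k, (((-1:ℝ)^ξ.length) • thetaPWord ξ (thetaR 0 h) * QQ ξ η
              - ((-1:ℝ)^ξ.length) • thetaPWord ξ (thetaR 1 h * aw []) * QQ ξ η))
           + ∑ ξ ∈ wordsLen k, ((-1:ℝ)^ξ.length) • thetaPWord ξ (thetaR 1 h)
              * shR gS (phiRW gS ξ oneR) η) := by
    unfold SumForm
    rw [show ((0:Fin 2) :: η).length + 1 = (η.length + 1) + 1 by simp, Finset.sum_range_succ']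
    have h0 : (∑ ξ ∈ wordsLen 0,
        ((-1:ℝ)^ξ.length) • thetaPWord ξ h * QQ ξ ((0:Fin 2) :: η)) = 0 := by
      rw [wordsLen_zero, Finset.sum_singleton, QQ_nil _ (by simp), mul_zero]
    rw [h0, add_zero]
    apply Finset.sum_congr rfl
    intro k _
    rw [sum_wordsLen_succ]
    congr 1
    · apply Finset.sum_congr rfl
      intro ξ _
      rw [QQ_cons00, thetaPWord_cons, thetaP_zero_apply, map_add, map_neg,
        List.length_cons, pow_succ, smul_helper1]
    · apply Finset.sum_congr rfl
      intro ξ _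
      rw [QQ_cons10, thetaPWord_cons, thetaP_one_apply, map_neg,
        List.length_cons, pow_succ, smul_helper2]
  rw [step1, Finset.sum_add_distrib]
  congr 1
  · rw [show (∑ k ∈ Finset.range (η.length + 1), ∑ ξ ∈ wordsLen k,
        (((-1:ℝ)^ξ.length) • thetaPWord ξ (thetaR 0 h) * QQ ξ η
          - ((-1:ℝ)^ξ.length) • thetaPWord ξ (thetaR 1 h * aw []) * QQ ξ η))
        = (∑ k ∈ Finset.range (η.length + 1), ((∑ ξ ∈ wordsLen k,
            ((-1:ℝ)^ξ.length) • thetaPWord ξ (thetaR 0 h) * QQ ξ η)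
          - ∑ ξ ∈ wordsLen k, ((-1:ℝ)^ξ.length) • thetaPWord ξ (thetaR 1 h * aw []) * QQ ξ η))
        from Finset.sum_congr rfl fun k _ => Finset.sum_sub_distrib _ _,
      Finset.sum_sub_distrib]
    rfl
  · -- shuffle exchange
    have e1 : ∀ k, (∑ ξ ∈ wordsLen k, ((-1:ℝ)^ξ.length) • thetaPWord ξ (thetaR 1 h)
          * shR gS (phiRW gS ξ oneR) η)
        = shR gS (fun v => ∑ ξ ∈ wordsLen k,
            ((-1:ℝ)^ξ.length) • thetaPWord ξ (thetaR 1 h) * phiRW gS ξ oneR v) η := by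
      intro k
      rw [shR_sumR]
      apply Finset.sum_congr rfl
      intro ξ _
      rw [shR_smulR]
    rw [show (∑ k ∈ Finset.range (η.length + 1), ∑ ξ ∈ wordsLen k,
          ((-1:ℝ)^ξ.length) • thetaPWord ξ (thetaR 1 h) * shR gS (phiRW gS ξ oneR) η)
        = ∑ k ∈ Finset.range (η.length + 1), shR gS (fun v => ∑ ξ ∈ wordsLen k,
            ((-1:ℝ)^ξ.length) • thetaPWord ξ (thetaR 1 h) * phiRW gS ξ oneR v) η
        from Finset.sum_congr rfl fun k _ => e1 k, ← shR_sumR]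
    apply shR_local
    · intro u _; rfl
    · intro u hu
      rw [SumForm_cutoff (thetaR 1 h) u (by simpa using hu : u.length ≤ η.length)]
      rfl

end Paper
namespace Paper

lemma shR_negL {R : Type*} [CommRing R] (w : Word) (c d : Word → R) :
    shR (fun v => -(c v)) d w = -(shR c d w) := by
  have h : (fun v => -(c v)) = fun v => (-1 : R) * c v := by funext v; ring
  rw [h, shR_smulL]; ring

lemma shR_combL {R : Type*} [CommRing R] (w : Word) (X Y Z d : Word → R) :
    shR (fun v => X v - Y v + Z v) d w = shR X d w - shR Y d w + shR Z d w := by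
  rw [show (fun v => X v - Y v + Z v) = fun v => (X v + -(Y v)) + Z v
      from funext fun v => by ring, shR_addL, shR_addL, shR_negL]
  ring

lemma shR_combR {R : Type*} [CommRing R] (w : Word) (X Y Z c : Word → R) :
    shR c (fun v => X v - Y v + Z v) w = shR c X w - shR c Y w + shR c Z w := by
  rw [shR_comm w c, shR_combL, shR_comm w X c, shR_comm w Y c, shR_comm w Z c]

lemma leibniz1 (i : Fin 2) (h k : H) :
    thetaR i (h * k) = h * thetaR i k + k * thetaR i h := by
  rw [Derivation.leibniz, smul_eq_mul, smul_eq_mul]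

lemma SumForm_main : ∀ n : ℕ, ∀ η : Word, η.length ≤ n →
    (∀ h k : H, SumForm (h * k) η
        = shR (fun v => SumForm h v) (fun v => SumForm k v) η)
    ∧ (∀ μ : Word, SumForm (aw μ) η = aw (μ ++ η)) := by
  intro n
  induction n with
  | zero =>
      intro η hη
      have : η = [] := List.length_eq_zero_iff.1 (by omega)
      subst this
      exact ⟨fun h k => by rw [SumForm_nil, shR_nil, SumForm_nil, SumForm_nil],
        fun μ => by rw [SumForm_nil, List.append_nil]⟩
  | succ n IH =>
      intro η hη
      cases η with
      | nil =>
          exact ⟨fun h k => by rw [SumForm_nil, shR_nil, SumForm_nil, SumForm_nil],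
            fun μ => by rw [SumForm_nil, List.append_nil]⟩
      | cons i η' =>
          have hη' : η'.length ≤ n := by simp at hη; omega
          obtain ⟨IHP, IHQ⟩ := IH η' hη'
          have lsh1 : ∀ h : H, (lshiftR 1 fun v => SumForm h v)
              = fun v => SumForm (thetaR 1 h) v := by
            intro h; funext v; exact SumForm_one_cons h v
          have lsh0 : ∀ h : H, (lshiftR 0 fun v => SumForm h v)
              = fun v => SumForm (thetaR 0 h) v - SumForm (thetaR 1 h * aw []) v
                  + shR gS (fun u => SumForm (thetaR 1 h) u) v := by
            intro h; funext v; exact SumForm_zero_cons h v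
          by_cases hi : i = 0
          · subst hi
            constructor
            · intro h k
              have e0 : SumForm (thetaR 0 (h * k)) η'
                  = shR (fun v => SumForm h v) (fun v => SumForm (thetaR 0 k) v) η'
                    + shR (fun v => SumForm (thetaR 0 h) v) (fun v => SumForm k v) η' := by
                rw [leibniz1, SumForm_add, IHP, IHP,
                  shR_comm η' (fun v => SumForm k v) (fun v => SumForm (thetaR 0 h) v)]
              have e1 : SumForm (thetaR 1 (h * k) * aw []) η'
                  = shR (fun v => SumForm h v) (fun v => SumForm (thetaR 1 k * aw []) v) η'
                    + shR (fun v => SumForm (thetaR 1 h * aw []) v) (fun v => SumForm k v) η' := by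
                have hh : thetaR 1 (h * k) * aw []
                    = h * (thetaR 1 k * aw []) + k * (thetaR 1 h * aw []) := by
                  rw [leibniz1]; ring
                rw [hh, SumForm_add, IHP, IHP,
                  shR_comm η' (fun v => SumForm k v) (fun v => SumForm (thetaR 1 h * aw []) v)]
              have e2 : shR gS (fun v => SumForm (thetaR 1 (h * k)) v) η'
                  = shR (fun v => SumForm h v) (shR gS (fun v => SumForm (thetaR 1 k) v)) η'
                    + shR (shR gS (fun v => SumForm (thetaR 1 h) v)) (fun v => SumForm k v) η' := by
                have step : shR gS (fun v => SumForm (thetaR 1 (h * k)) v) η'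
                    = shR gS (fun v =>
                        shR (fun u => SumForm h u) (fun u => SumForm (thetaR 1 k) u) v
                        + shR (fun u => SumForm (thetaR 1 h) u) (fun u => SumForm k u) v) η' := by
                  apply shR_local
                  · intro u _; rfl
                  · intro u hu
                    obtain ⟨IHP', _⟩ := IH u (le_trans hu hη')
                    rw [leibniz1, SumForm_add, IHP', IHP',
                      shR_comm u (fun v => SumForm k v) (fun v => SumForm (thetaR 1 h) v)]
                rw [step, shR_addR]
                apply congrArg₂ (· + ·)
                · rw [show (shR (fun u => SumForm h u) fun u => SumForm (thetaR 1 k) u)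
                        = shR (fun u => SumForm (thetaR 1 k) u) fun u => SumForm h u
                      from funext fun v => shR_comm v _ _,
                    ← shR_assoc, shR_comm]
                · rw [← shR_assoc]
              rw [SumForm_zero_cons, e0, e1, e2, shR_cons, lsh0, lsh0, shR_combL, shR_combR]
              ring
            · intro μ
              rw [SumForm_zero_cons, thetaR_X, thetaR_X]
              have hcancel : SumForm (aw (μ ++ [1]) * aw []) η'
                  = shR gS (fun v => SumForm (aw (μ ++ [1])) v) η' := by
                rw [IHP, shR_comm]
                apply shR_local
                · intro u hu
                  obtain ⟨_, IHQ'⟩ := IH u (le_trans hu hη')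
                  rw [IHQ' [], List.nil_append]
                  rfl
                · intro u _; rfl
              rw [hcancel, sub_add_cancel, IHQ]
              congr 1
              simp
          · have hi1 : i = 1 := fin2_one hi
            subst hi1
            constructor
            · intro h k
              rw [SumForm_one_cons, leibniz1, SumForm_add, IHP, IHP, shR_cons, lsh1, lsh1,
                shR_comm η' (fun v => SumForm k v) (fun v => SumForm (thetaR 1 h) v)]
              ring
            · intro μ
              rw [SumForm_one_cons, thetaR_X, IHQ]
              congr 1
              simp

end Paper
namespace Paper

lemma evalS_eq_eval (c : Series) (p : H) : evalS c p = MvPolynomial.eval c p := by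
  rw [evalS, MvPolynomial.aeval_def, Algebra.algebraMap_self, MvPolynomial.eval₂_id]

lemma evalS_inj {p q : H} (h : ∀ c : Series, evalS c p = evalS c q) : p = q := by
  apply MvPolynomial.funext
  intro c
  rw [← evalS_eq_eval, ← evalS_eq_eval]
  exact h c

/-- the canonical iso `ℝ[W ⊕ W] ≃ H ⊗ H`, as a pair of algebra maps -/
noncomputable def ΨH : MvPolynomial (Word ⊕ Word) ℝ →ₐ[ℝ] H ⊗[ℝ] H :=
  MvPolynomial.aeval (Sum.elim (fun w => aw w ⊗ₜ[ℝ] 1) (fun w => (1 : H) ⊗ₜ[ℝ] aw w))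

noncomputable def ΘH : H ⊗[ℝ] H →ₐ[ℝ] MvPolynomial (Word ⊕ Word) ℝ :=
  Algebra.TensorProduct.productMap
    (MvPolynomial.aeval fun w => MvPolynomial.X (Sum.inl w))
    (MvPolynomial.aeval fun w => MvPolynomial.X (Sum.inr w))

lemma ΨΘ (x : H ⊗[ℝ] H) : ΨH (ΘH x) = x := by
  have : (ΨH.comp ΘH) = AlgHom.id ℝ (H ⊗[ℝ] H) := by
    apply Algebra.TensorProduct.ext
    · apply MvPolynomial.algHom_ext
      intro w
      simp [ΨH, ΘH, aw]
    · apply MvPolynomial.algHom_ext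
      intro w
      simp [ΨH, ΘH, aw]
  exact congrArg (fun f => f x) (congrArg (fun f => f.toFun) this)

lemma evalPair_tmul (c d : Series) (p q : H) :
    evalPair c d (p ⊗ₜ[ℝ] q) = evalS c p * evalS d q := by
  simp [evalPair]

lemma evalPair_eq_productMap (c d : Series) (x : H ⊗[ℝ] H) :
    evalPair c d x = Algebra.TensorProduct.productMap (evalS c) (evalS d) x := by
  induction x using TensorProduct.induction_on with
  | zero => simp
  | tmul p q => rw [evalPair_tmul, Algebra.TensorProduct.productMap_apply_tmul]
  | add a b ha hb => rw [map_add, map_add, ha, hb]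

lemma evalPair_sep {x y : H ⊗[ℝ] H}
    (h : ∀ c d : Series, evalPair c d x = evalPair c d y) : x = y := by
  rw [← ΨΘ x, ← ΨΘ y]
  congr 1
  apply MvPolynomial.funext
  intro f
  have key : ∀ z : H ⊗[ℝ] H,
      MvPolynomial.eval f (ΘH z) = evalPair (fun w => f (Sum.inl w)) (fun w => f (Sum.inr w)) z := by
    intro z
    induction z using TensorProduct.induction_on with
    | zero => simp
    | tmul p q =>
        rw [evalPair_tmul]
        show MvPolynomial.eval f
          ((MvPolynomial.aeval fun w => MvPolynomial.X (Sum.inl w)) p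
            * (MvPolynomial.aeval fun w => MvPolynomial.X (Sum.inr w)) q) = _
        rw [map_mul]
        congr 1
        · have : (MvPolynomial.eval f).comp
              (MvPolynomial.aeval (R := ℝ) fun w => MvPolynomial.X (Sum.inl w)).toRingHom
              = (evalS fun w => f (Sum.inl w)).toRingHom := by
            apply MvPolynomial.ringHom_ext
            · intro r; simp [evalS]
            · intro w; simp [evalS, aw]
          simpa using RingHom.congr_fun this p
        · have : (MvPolynomial.eval f).comp
              (MvPolynomial.aeval (R := ℝ) fun w => MvPolynomial.X (Sum.inr w)).toRingHom
              = (evalS fun w => f (Sum.inr w)).toRingHom := by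
            apply MvPolynomial.ringHom_ext
            · intro r; simp [evalS]
            · intro w; simp [evalS, aw]
          simpa using RingHom.congr_fun this q
    | add a b ha hb => rw [map_add, map_add, ha, hb, ← map_add]
  rw [key x, key y]
  exact h _ _

end Paper
namespace Paper

lemma evalS_aw (c : Series) (ν : Word) : evalS c (aw ν) = c ν := by
  simp [evalS, aw]

lemma evalS_QQ (d : Series) (ξ η : Word) : evalS d (QQ ξ η) = phi d ξ one η := by
  have h := map_phiRW (evalS d).toRingHom gS ξ oneR η
  have hg : ((evalS d).toRingHom : H → ℝ) ∘ gS = d := by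
    funext ν; exact evalS_aw d ν
  have ho : ((evalS d).toRingHom : H → ℝ) ∘ (oneR : Word → H) = oneR := by
    funext w; exact map_oneR _ w
  show evalS d (phiRW gS ξ oneR η) = _
  rw [show (evalS d) (phiRW gS ξ oneR η) = (evalS d).toRingHom (phiRW gS ξ oneR η) from rfl, h,
    hg, ho, phi_eq_phiRW, one_eq_oneR]

lemma phi_vanish {d : Series} {ξ η : Word} (h : η.length < ξ.length) : phi d ξ one η = 0 := by
  rw [phi_eq_phiRW, one_eq_oneR]
  exact phiRW_minlen d ξ η h

lemma mcomp_eq_sum (c d : Series) (η : Word) :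
    mcomp c d η = ∑ k ∈ Finset.range (η.length + 1), ∑ ξ ∈ wordsLen k, c ξ * phi d ξ one η := by
  unfold mcomp
  rw [tsum_eq_sum (s := (Finset.range (η.length + 1)).biUnion wordsLen)
    (by
      intro ξ hξ
      have : η.length < ξ.length := by
        by_contra hc
        exact hξ (Finset.mem_biUnion.2 ⟨ξ.length, Finset.mem_range.2 (by omega),
          mem_wordsLen.2 rfl⟩)
      rw [phi_vanish this, mul_zero])]
  rw [Finset.sum_biUnion]
  intro a ha b hb hab
  simp only [Finset.coe_range, Set.mem_Iio] at ha hb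
  show Disjoint (wordsLen a) (wordsLen b)
  rw [Finset.disjoint_left]
  intro x hxa hxb
  exact hab ((mem_wordsLen.1 hxa).symm.trans (mem_wordsLen.1 hxb))

/-- the explicit coproduct value -/
noncomputable def Dexp (η : Word) : H ⊗[ℝ] H :=
  (∑ k ∈ Finset.range (η.length + 1), ∑ ξ ∈ wordsLen k, aw ξ ⊗ₜ[ℝ] QQ ξ η)
    + (1 : H) ⊗ₜ[ℝ] aw η

lemma evalPair_Dexp (c d : Series) (η : Word) :
    evalPair c d (Dexp η) = mcomp c d η + d η := by
  unfold Dexp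
  rw [map_add, map_sum, mcomp_eq_sum]
  congr 1
  · apply Finset.sum_congr rfl
    intro k _
    rw [map_sum]
    apply Finset.sum_congr rfl
    intro ξ _
    rw [evalPair_tmul, evalS_aw, evalS_QQ]
  · rw [evalPair_tmul, map_one, one_mul, evalS_aw]

lemma Delta_eq (Δ : H →ₐ[ℝ] (H ⊗[ℝ] H)) (hΔ : IsFBCoproduct Δ) (η : Word) :
    Δ (aw η) = Dexp η := by
  apply evalPair_sep
  intro c d
  rw [hΔ η c d, evalPair_Dexp]

lemma counit_aw (η : Word) : counit (aw η) = 0 := by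
  simp [counit, evalS, aw]

lemma S_one (Δ : H →ₐ[ℝ] (H ⊗[ℝ] H)) (S : H →ₗ[ℝ] H) (hS : IsAntipode Δ S) :
    S 1 = 1 := by
  have h := hS.1 1
  rw [map_one, Algebra.TensorProduct.one_def] at h
  simp only [TensorProduct.map_tmul, LinearMap.mul'_apply, LinearMap.id_coe, id_eq,
    map_one, one_smul, mul_one] at h
  exact h

end Paper
open Paper in
/-- For any nonempty word `η = x_{i_1} ⋯ x_{i_l} ∈ X*`, the antipode `S`
of the output feedback Hopf algebra satisfies `S a_η = (−1)^{|η|−1} Θ̃′_η (a_∅)`. -/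
theorem antipode_right_augmentation_formula
    (Δ : H →ₐ[ℝ] (H ⊗[ℝ] H)) (hΔ : IsFBCoproduct Δ)
    (S : H →ₗ[ℝ] H) (hS : IsAntipode Δ S) :
    ∀ η : Word, η ≠ [] →
      S (aw η) = ((-1 : ℝ) ^ (η.length - 1)) • thetaPWord η (aw []) := by
  have hS1 : S 1 = 1 := S_one Δ S hS
  suffices hmain : ∀ N : ℕ, ∀ η : Word, η ≠ [] → mW η = N →
      S (aw η) = ((-1 : ℝ) ^ (η.length - 1)) • thetaPWord η (aw []) by
    intro η hne; exact hmain (mW η) η hne rfl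
  intro N
  induction N using Nat.strong_induction_on with
  | _ N IH =>
  intro η hne hmW
  have hant := hS.1 (aw η)
  rw [Delta_eq Δ hΔ η, counit_aw, zero_smul] at hant
  have hexp : (∑ k ∈ Finset.range (η.length + 1), ∑ ξ ∈ wordsLen k, S (aw ξ) * QQ ξ η)
      + aw η = 0 := by
    rw [← hant]
    unfold Dexp
    rw [map_add, map_add, map_sum, map_sum]
    congr 1
    · apply Finset.sum_congr rfl
      intro k _
      rw [map_sum, map_sum]
      apply Finset.sum_congr rfl
      intro ξ _
      rw [TensorProduct.map_tmul, LinearMap.mul'_apply]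
      rfl
    · rw [TensorProduct.map_tmul, LinearMap.mul'_apply, hS1, one_mul]
      rfl
  have hmem : η ∈ wordsLen η.length := mem_wordsLen.2 rfl
  have hsplit : (∑ k ∈ Finset.range (η.length + 1), ∑ ξ ∈ wordsLen k, S (aw ξ) * QQ ξ η)
      = S (aw η) + (∑ ξ ∈ (wordsLen η.length).erase η, S (aw ξ) * QQ ξ η)
        + ∑ k ∈ Finset.range η.length, ∑ ξ ∈ wordsLen k, S (aw ξ) * QQ ξ η := by
    rw [Finset.sum_range_succ, ← Finset.add_sum_erase _ _ hmem, QQ_diag, mul_one]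
    ring
  have hG : SumForm (aw []) η = aw η := by
    rw [(SumForm_main η.length η le_rfl).2 [], List.nil_append]
  have hGsplit : SumForm (aw []) η
      = ((-1:ℝ) ^ η.length) • thetaPWord η (aw [])
        + (∑ ξ ∈ (wordsLen η.length).erase η,
            ((-1:ℝ) ^ ξ.length) • thetaPWord ξ (aw []) * QQ ξ η)
        + ∑ k ∈ Finset.range η.length, ∑ ξ ∈ wordsLen k,
            ((-1:ℝ) ^ ξ.length) • thetaPWord ξ (aw []) * QQ ξ η := by
    unfold SumForm
    rw [Finset.sum_range_succ, ← Finset.add_sum_erase _ _ hmem, QQ_diag, mul_one]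
    ring
  have hterm : ∀ ξ : Word, ξ ≠ η →
      S (aw ξ) * QQ ξ η = -(((-1:ℝ) ^ ξ.length) • thetaPWord ξ (aw []) * QQ ξ η) := by
    intro ξ hξη
    by_cases hz : QQ ξ η = 0
    · rw [hz, mul_zero, mul_zero, neg_zero]
    · have hb := phiRW_mbound gS ξ η hz
      have hξne : ξ ≠ [] := by
        rintro rfl
        exact hz (QQ_nil η hne)
      have hlt : mW ξ < N := by
        rcases lt_or_eq_of_le hb.1 with hlt | heq
        · omega
        · exact absurd (hb.2 heq.symm).symm hξη
      rw [IH (mW ξ) (by omega) ξ hξne rfl]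
      obtain ⟨j, t, rfl⟩ := List.exists_cons_of_ne_nil hξne
      rw [List.length_cons, Nat.add_sub_cancel, pow_succ, mul_neg_one, neg_smul, neg_mul,
        neg_neg]
  have hsum1 : (∑ ξ ∈ (wordsLen η.length).erase η, S (aw ξ) * QQ ξ η)
      = -∑ ξ ∈ (wordsLen η.length).erase η,
          ((-1:ℝ) ^ ξ.length) • thetaPWord ξ (aw []) * QQ ξ η := by
    rw [← Finset.sum_neg_distrib]
    exact Finset.sum_congr rfl fun ξ hξ => hterm ξ (Finset.ne_of_mem_erase hξ)
  have hsum2 : (∑ k ∈ Finset.range η.length, ∑ ξ ∈ wordsLen k, S (aw ξ) * QQ ξ η)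
      = -∑ k ∈ Finset.range η.length, ∑ ξ ∈ wordsLen k,
          ((-1:ℝ) ^ ξ.length) • thetaPWord ξ (aw []) * QQ ξ η := by
    rw [← Finset.sum_neg_distrib]
    apply Finset.sum_congr rfl
    intro k hk
    rw [← Finset.sum_neg_distrib]
    apply Finset.sum_congr rfl
    intro ξ hξ
    apply hterm
    intro hcontra
    have h1 := mem_wordsLen.1 hξ
    rw [hcontra] at h1
    simp only [Finset.mem_range] at hk
    omega
  have final : S (aw η) = -(((-1:ℝ) ^ η.length) • thetaPWord η (aw [])) := by
    have h1 := hexp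
    rw [hsplit, hsum1, hsum2] at h1
    have h2 := hG
    rw [hGsplit] at h2
    linear_combination h1 + h2
  rw [final]
  obtain ⟨j, t, rfl⟩ := List.exists_cons_of_ne_nil hne
  rw [List.length_cons, Nat.add_sub_cancel, pow_succ, mul_neg_one, neg_smul, neg_neg]
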